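/- Let A be a domain which is not a field, K = Frac(A), and R = A ⋉ K. Let H be an R-submodule of R^m, U = {x ∈ A^m : (x,e) ∈ H for some e ∈ K^m}, and E = {e ∈ K^m : (x,e) ∈ H for some x ∈ A^m}. If H is finitely generated as an R-module and E is a K-subspace of K^m, then U is a finitely generated A-module and H = U ⋉ KU. -/
import Mathlib

/-- Lemma 3.2: let `A` be a domain (not a field) with fraction field `K`, `R = A ⋉ K`,
`H` an `R`-submodule of `R^m`, `U = {x ∈ A^m : (x,e) ∈ H for some e}`, and
`E = {e ∈ K^m : (x,e) ∈ H for some x}`. If `H` is finitely generated and `E` is a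
`K`-vector space (closed under `K`-scaling), then `U` is a finitely generated `A`-module
and `H = U ⋉ KU`, where `KU` is the `K`-span of `U` in `K^m`. -/
theorem trivSqZeroExt_fg_submodule (A : Type*) [CommRing A] [IsDomain A] (hA : ¬IsField A)
    (K : Type*) [Field K] [Algebra A K] [IsFractionRing A K]
    [Module Aᵐᵒᵖ K] [IsCentralScalar A K]
    (m : ℕ)
    (H : Submodule (TrivSqZeroExt A K) (Fin m → TrivSqZeroExt A K))
    (U : Submodule A (Fin m → A))
    (hU : ∀ x : Fin m → A, x ∈ U ↔ ∃ e : Fin m → K,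
      (fun i => TrivSqZeroExt.inl (x i) + TrivSqZeroExt.inr (e i)) ∈ H)
    (hH : H.FG)
    (hE : ∀ (k : K) (e : Fin m → K),
      (∃ x : Fin m → A, (fun i => TrivSqZeroExt.inl (x i) + TrivSqZeroExt.inr (e i)) ∈ H) →
      ∃ x : Fin m → A,
        (fun i => TrivSqZeroExt.inl (x i) + TrivSqZeroExt.inr (k • e i)) ∈ H) :
    U.FG ∧ ∀ h : Fin m → TrivSqZeroExt A K,
      h ∈ H ↔ ((fun i => (h i).fst) ∈ U ∧
        (fun i => (h i).snd) ∈ Submodule.span K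
          ((fun (x : Fin m → A) (i : Fin m) => algebraMap A K (x i)) ''
            (U : Set (Fin m → A)))) := by
  classical
  obtain ⟨S, hS⟩ := hH
  set ι : (Fin m → A) → (Fin m → K) := fun x i => algebraMap A K (x i) with hι
  set T : Submodule K (Fin m → K) := Submodule.span K (ι '' (U : Set (Fin m → A))) with hT
  -- any member of H has first components in U
  have memU : ∀ h ∈ H, (fun i => (h i).fst) ∈ U := by
    intro h hh
    refine (hU _).2 ⟨fun i => (h i).snd, ?_⟩
    simpa [TrivSqZeroExt.inl_fst_add_inr_snd_eq] using hh
  -- `ι` of members of `U` lie in `T`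
  have hιT : ∀ x ∈ U, ι x ∈ T := fun x hx => Submodule.subset_span ⟨x, hx, rfl⟩
  set fstS : Set (Fin m → A) :=
    (fun (g : Fin m → TrivSqZeroExt A K) => fun i => (g i).fst) '' (S : Set _) with hfstS
  set sndS : Set (Fin m → K) :=
    (fun (g : Fin m → TrivSqZeroExt A K) => fun i => (g i).snd) '' (S : Set _) with hsndS
  -- claim 1 : first coordinates lie in the A-span of fstS
  have claim1 : ∀ h ∈ H, (fun i => (h i).fst) ∈ Submodule.span A fstS := by
    intro h hh
    rw [← hS] at hh
    induction hh using Submodule.span_induction with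
    | mem x hx => exact Submodule.subset_span ⟨x, hx, rfl⟩
    | zero =>
        have : (fun i => ((0 : Fin m → TrivSqZeroExt A K) i).fst) = (0 : Fin m → A) := by
          funext i; simp
        rw [this]; exact Submodule.zero_mem _
    | add x y hx hy ihx ihy =>
        have : (fun i => ((x + y) i).fst) = (fun i => (x i).fst) + fun i => (y i).fst := by
          funext i; simp [TrivSqZeroExt.fst_add]
        rw [this]; exact Submodule.add_mem _ ihx ihy
    | smul r x hx ih =>
        have : (fun i => ((r • x) i).fst) = r.fst • fun i => (x i).fst := by
          funext i
          simp [Pi.smul_apply, smul_eq_mul, TrivSqZeroExt.fst_mul]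
        rw [this]; exact Submodule.smul_mem _ _ ih
  -- U is the A-span of fstS
  have hUspan : U = Submodule.span A fstS := by
    apply le_antisymm
    · intro x hx
      obtain ⟨e, he⟩ := (hU x).1 hx
      have h1 := claim1 _ he
      simpa using h1
    · rw [Submodule.span_le]
      rintro _ ⟨g, hg, rfl⟩
      exact memU g (hS ▸ Submodule.subset_span hg)
  have hUFG : U.FG := by
    rw [hUspan]
    exact Submodule.fg_span (S.finite_toSet.image _)
  -- claim 2 : second coords, mod T, are in the A-span of images of sndS
  have claim2 : ∀ h ∈ H,
      T.mkQ (fun i => (h i).snd) ∈ Submodule.span A (⇑T.mkQ '' sndS) := by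
    intro h hh
    rw [← hS] at hh
    induction hh using Submodule.span_induction with
    | mem x hx => exact Submodule.subset_span ⟨_, ⟨x, hx, rfl⟩, rfl⟩
    | zero =>
        have : (fun i => ((0 : Fin m → TrivSqZeroExt A K) i).snd) = (0 : Fin m → K) := by
          funext i; simp
        rw [this, map_zero]; exact Submodule.zero_mem _
    | add x y hx hy ihx ihy =>
        have : (fun i => ((x + y) i).snd) = (fun i => (x i).snd) + fun i => (y i).snd := by
          funext i; simp [TrivSqZeroExt.snd_add]
        rw [this, map_add]
        exact Submodule.add_mem _ ihx ihy
    | smul r x hx ih =>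
        have hxH : x ∈ H := hS ▸ hx
        have key : (fun i => ((r • x) i).snd)
            = r.fst • (fun i => (x i).snd) + r.snd • ι (fun i => (x i).fst) := by
          funext i
          show (r * x i).snd = r.fst • (x i).snd + r.snd * algebraMap A K ((x i).fst)
          rw [TrivSqZeroExt.snd_mul, op_smul_eq_smul]
          congr 1
          rw [Algebra.smul_def, mul_comm]
        rw [key, map_add]
        have h0 : T.mkQ (r.snd • ι (fun i => (x i).fst)) = 0 := by
          rw [map_smul, Submodule.mkQ_apply, (Submodule.Quotient.mk_eq_zero T).2
            (hιT _ (memU x hxH)), smul_zero]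
        rw [h0, add_zero]
        have : T.mkQ (r.fst • fun i => (x i).snd) = r.fst • T.mkQ (fun i => (x i).snd) := by
          simp [Submodule.mkQ_apply, Submodule.Quotient.mk_smul]
        rw [this]
        exact Submodule.smul_mem _ _ ih
  -- main claim : second coordinates lie in T
  have hET : ∀ h ∈ H, (fun i => (h i).snd) ∈ T := by
    by_contra hcon
    push_neg at hcon
    obtain ⟨h, hh, hhT⟩ := hcon
    set v : (Fin m → K) ⧸ T := T.mkQ (fun i => (h i).snd) with hv
    have hv0 : v ≠ 0 := by
      rw [hv, Ne, Submodule.mkQ_apply, Submodule.Quotient.mk_eq_zero]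
      exact hhT
    obtain ⟨φ, hφ⟩ : ∃ φ : Module.Dual K ((Fin m → K) ⧸ T), φ v ≠ 0 := by
      by_contra hc
      push_neg at hc
      exact hv0 ((Module.forall_dual_apply_eq_zero_iff K v).1 hc)
    have htop : ∀ k : K, k ∈ Submodule.span A (⇑φ '' (⇑T.mkQ '' sndS)) := by
      intro k
      set c : K := k * (φ v)⁻¹ with hc
      obtain ⟨x', hx'⟩ := hE c (fun i => (h i).snd)
        ⟨fun i => (h i).fst, by simpa [TrivSqZeroExt.inl_fst_add_inr_snd_eq] using hh⟩
      have h2 := claim2 _ hx'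
      have hsnd : (fun i => ((fun i => TrivSqZeroExt.inl (x' i)
          + TrivSqZeroExt.inr (c • (h i).snd)) i).snd) = c • fun i => (h i).snd := by
        funext i; simp
      rw [hsnd] at h2
      have h3 := Submodule.apply_mem_span_image_of_mem_span (φ.restrictScalars A) h2
      rw [LinearMap.coe_restrictScalars] at h3
      have h4 : (φ.restrictScalars A) (T.mkQ (c • fun i => (h i).snd)) = k := by
        show φ (T.mkQ (c • fun i => (h i).snd)) = k
        rw [map_smul, map_smul, smul_eq_mul]
        show c * φ v = k
        rw [hc, mul_assoc, inv_mul_cancel₀ hφ, mul_one]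
      exact h4 ▸ h3
    have hfg : (⊤ : Submodule A K).FG := by
      have heq : Submodule.span A (⇑φ '' (⇑T.mkQ '' sndS)) = ⊤ :=
        eq_top_iff.2 fun k _ => htop k
      rw [← heq]
      exact Submodule.fg_span (((S.finite_toSet.image _).image _).image _)
    have : Module.Finite A K := Module.finite_def.2 hfg
    have : Algebra.IsIntegral A K := Algebra.IsIntegral.of_finite A K
    exact hA ((Algebra.IsIntegral.isField_iff_isField
      (IsFractionRing.injective A K)).2 (Field.toIsField K))
  -- pure second-coordinate elements of T give members of H
  have hH0 : ∀ f ∈ T, (fun i => (TrivSqZeroExt.inr (f i) : TrivSqZeroExt A K)) ∈ H := by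
    intro f hf
    rw [hT] at hf
    obtain ⟨n, c, g, hsum⟩ := Submodule.mem_span_set'.1 hf
    have hmem : ∀ j : Fin n,
        (fun i => (TrivSqZeroExt.inr ((c j • (g j : Fin m → K)) i) : TrivSqZeroExt A K)) ∈ H := by
      intro j
      obtain ⟨u, hu, hgu⟩ := (g j).2
      obtain ⟨e'', he''⟩ := (hU u).1 hu
      have hsm := H.smul_mem (TrivSqZeroExt.inr (c j) : TrivSqZeroExt A K) he''
      have heq : (TrivSqZeroExt.inr (c j) : TrivSqZeroExt A K)
          • (fun i => TrivSqZeroExt.inl (u i) + TrivSqZeroExt.inr (e'' i)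
              : Fin m → TrivSqZeroExt A K)
          = fun i => (TrivSqZeroExt.inr ((c j • (g j : Fin m → K)) i) : TrivSqZeroExt A K) := by
        funext i
        simp only [Pi.smul_apply, smul_eq_mul, mul_add, TrivSqZeroExt.inr_mul_inl,
          TrivSqZeroExt.inr_mul_inr, add_zero, op_smul_eq_smul, ← hgu]
        show TrivSqZeroExt.inr (u i • c j) = TrivSqZeroExt.inr (c j * algebraMap A K (u i))
        rw [Algebra.smul_def, mul_comm]
      rwa [heq] at hsm
    have hsum' : (fun i => (TrivSqZeroExt.inr (f i) : TrivSqZeroExt A K))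
        = ∑ j : Fin n, fun i =>
            (TrivSqZeroExt.inr ((c j • (g j : Fin m → K)) i) : TrivSqZeroExt A K) := by
      funext i
      rw [← hsum, Finset.sum_apply, Finset.sum_apply]
      exact map_sum (TrivSqZeroExt.inrHom A K) _ _
    rw [hsum']
    exact Submodule.sum_mem _ fun j _ => hmem j
  refine ⟨hUFG, fun h => ⟨fun hh => ⟨memU h hh, hET h hh⟩, ?_⟩⟩
  rintro ⟨h1, h2⟩
  obtain ⟨e', he'⟩ := (hU _).1 h1
  have he'T : e' ∈ T := by
    have := hET _ he'
    simpa using this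
  have hd : ((fun i => (h i).snd) - e') ∈ T := T.sub_mem h2 he'T
  have hmem2 := hH0 _ hd
  have heq : h = (fun i => TrivSqZeroExt.inl ((fun i => (h i).fst) i)
      + TrivSqZeroExt.inr (e' i))
      + fun i => (TrivSqZeroExt.inr (((fun i => (h i).snd) - e') i) : TrivSqZeroExt A K) := by
    funext i
    simp only [Pi.add_apply, Pi.sub_apply]
    rw [add_assoc, ← TrivSqZeroExt.inr_add]
    simp [TrivSqZeroExt.inl_fst_add_inr_snd_eq]
  rw [heq]
  exact H.add_mem he' hmem2
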